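/- (Local synchronization under a quadratic remainder bound.) Let H be a real n×n Hurwitz matrix, C > 0, and let g : ℝ × ℝ^n → ℝ^n be continuous with ‖g(t, v)‖ ≤ C‖v‖² for all t and v. Then there exists δ > 0 such that every differentiable curve r : [0, ∞) → ℝ^n satisfying r'(t) = H·r(t) + g(t, r(t)) for all t ≥ 0 and ‖r(0)‖ ≤ δ satisfies ‖r(t)‖ → 0 as t → ∞. -/

import Mathlib

set_option maxHeartbeats 1000000
open NormedSpace Polynomial

section AuxLemmas

variable {n : ℕ}
local notation "F" => EuclideanSpace ℂ (Fin n)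

-- minimum of a list of positives
lemma list_min_pos (l : List ℝ) (h : ∀ x ∈ l, 0 < x) :
    0 < l.foldr min 1 ∧ ∀ x ∈ l, l.foldr min 1 ≤ x := by
  induction l with
  | nil => exact ⟨one_pos, by simp⟩
  | cons a l ih =>
    obtain ⟨ih1, ih2⟩ := ih (fun x hx => h x (List.mem_cons_of_mem a hx))
    constructor
    · exact lt_min (h a (List.mem_cons_self)) ih1
    · intro x hx
      rcases List.mem_cons.mp hx with rfl | hx
      · exact min_le_left _ _
      · exact le_trans (min_le_right _ _) (ih2 x hx)


lemma decay_list (A : F →L[ℝ] F) (hA : ∀ (μ : ℂ) (x : F), A (μ • x) = μ • A x) (b : ℝ)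
    (l : List ℂ) (hl : ∀ μ ∈ l, μ.re ≤ -b) :
    ∃ M : ℝ, 1 ≤ M ∧ ∀ x : F, ((l.map (fun μ => A - μ • (1 : F →L[ℝ] F))).prod) x = 0 →
      ∀ t : ℝ, 0 ≤ t →
        ‖exp (t • A) x‖ ≤ M * (1+t)^l.length * Real.exp (-(b*t)) * ‖x‖ := by
  induction l with
  | nil =>
    refine ⟨1, le_refl 1, fun x hx t ht => ?_⟩
    simp only [List.map_nil, List.prod_nil, ContinuousLinearMap.one_apply] at hx
    subst hx
    simp [Real.exp_nonneg]
  | cons μ l' IH =>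
    obtain ⟨M', hM'1, hM'⟩ := IH (fun ν hν => hl ν (List.mem_cons_of_mem μ hν))
    have hμre : μ.re ≤ -b := hl μ (List.mem_cons_self)
    -- commutation facts
    have hcomm : ∀ ν : ℂ, Commute (A - μ • (1 : F →L[ℝ] F)) (A - ν • (1 : F →L[ℝ] F)) := by
      intro ν
      refine ContinuousLinearMap.ext fun x => ?_
      simp only [ContinuousLinearMap.mul_apply, ContinuousLinearMap.sub_apply,
        ContinuousLinearMap.smul_apply, ContinuousLinearMap.one_apply, map_sub, hA,
        map_smul, smul_sub]
      rw [smul_comm μ ν]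
      abel
    set c : ℝ := ‖A‖ + ‖μ‖ with hc
    have hc0 : 0 ≤ c := by positivity
    refine ⟨M' * (1 + c), by nlinarith, fun x hx t ht => ?_⟩
    -- rewrite annihilation
    set P' : F →L[ℝ] F := (l'.map (fun ν => A - ν • (1 : F →L[ℝ] F))).prod with hP'
    have hxP : P' (A x - μ • x) = 0 := by
      have h1 : ((A - μ • (1 : F →L[ℝ] F)) * P') x = 0 := by
        simpa using hx
      have h2 : Commute (A - μ • (1 : F →L[ℝ] F)) P' := by
        apply Commute.list_prod_right
        intro y hy
        obtain ⟨ν, _, rfl⟩ := List.mem_map.mp hy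
        exact hcomm ν
      have h3 : (P' * (A - μ • (1 : F →L[ℝ] F))) x = 0 := by rw [← h2.eq]; exact h1
      simpa [ContinuousLinearMap.mul_apply, ContinuousLinearMap.sub_apply] using h3
    set x₁ : F := A x - μ • x with hx₁
    have hx₁n : ‖x₁‖ ≤ c * ‖x‖ := by
      calc ‖A x - μ • x‖ ≤ ‖A x‖ + ‖μ • x‖ := norm_sub_le _ _
        _ ≤ ‖A‖ * ‖x‖ + ‖μ‖ * ‖x‖ := by
            gcongr
            · exact A.le_opNorm x
            · rw [norm_smul]
        _ = c * ‖x‖ := by ring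
    -- exp commutes with complex scalar smul and with A
    have hexp_smul : ∀ (s : ℝ) (ν : ℂ) (v : F), exp (s • A) (ν • v) = ν • exp (s • A) v := by
      intro s ν v
      have h0 : Commute (ν • (1 : F →L[ℝ] F)) (s • A) := by
        refine ContinuousLinearMap.ext fun u => ?_
        simp only [ContinuousLinearMap.mul_apply, ContinuousLinearMap.smul_apply,
          ContinuousLinearMap.one_apply, hA, map_smul]
      have h1 : Commute (ν • (1 : F →L[ℝ] F)) (exp (s • A)) := Commute.exp_right h0
      have h2 := ContinuousLinearMap.ext_iff.mp h1.eq v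
      simp only [ContinuousLinearMap.mul_apply, ContinuousLinearMap.smul_apply,
        ContinuousLinearMap.one_apply] at h2
      exact h2.symm
    have hexpA : ∀ (s : ℝ) (v : F), exp (s • A) (A v) = A (exp (s • A) v) := by
      intro s v
      have h0 : Commute A (s • A) := by
        refine ContinuousLinearMap.ext fun u => ?_
        simp only [ContinuousLinearMap.mul_apply, ContinuousLinearMap.smul_apply, map_smul]
      have h1 : Commute A (exp (s • A)) := Commute.exp_right h0
      have h2 := ContinuousLinearMap.ext_iff.mp h1.eq v
      simp only [ContinuousLinearMap.mul_apply] at h2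
      exact h2.symm
    set y : ℝ → F := fun s => exp (s • A) x with hy
    set z : ℝ → F := fun s => exp (s • A) x₁ with hz
    set w : ℝ → F := fun s => Complex.exp (-(μ * s)) • y s with hw
    have hyd : ∀ s : ℝ, HasDerivAt y (exp (s • A) (A x)) s := by
      intro s
      have hD := hasDerivAt_exp_smul_const (𝕂 := ℝ) A s
      have h1 := hD.clm_apply (hasDerivAt_const s x)
      simp only [ContinuousLinearMap.mul_apply, map_zero, add_zero] at h1
      exact h1
    have hwd : ∀ s : ℝ, HasDerivAt w (Complex.exp (-(μ * s)) • z s) s := by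
      intro s
      have hce : HasDerivAt (fun u : ℝ => Complex.exp (-(μ * u))) (Complex.exp (-(μ * s)) * (-μ)) s := by
        have h0 : HasDerivAt (fun u : ℝ => (u : ℂ)) 1 s := Complex.ofRealCLM.hasDerivAt
        have h1 : HasDerivAt (fun u : ℝ => -(μ * u)) (-μ) s := by
          simpa using ((h0.const_mul μ).fun_neg)
        simpa [mul_comm] using h1.cexp
      have hd := hce.smul (hyd s)
      refine hd.congr_deriv ?_
      have hzy : z s = exp (s • A) (A x) - μ • y s := by
        simp only [hz, hx₁, hy, map_sub, hexp_smul]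
      rw [hzy]
      simp only [smul_sub, smul_smul, neg_smul, mul_comm]
      module
    -- continuity of z and the integrand
    have hzd : ∀ s : ℝ, HasDerivAt z (exp (s • A) (A x₁)) s := by
      intro s
      have hD := hasDerivAt_exp_smul_const (𝕂 := ℝ) A s
      have h1 := hD.clm_apply (hasDerivAt_const s x₁)
      simp only [ContinuousLinearMap.mul_apply, map_zero, add_zero] at h1
      exact h1
    have hzcont : Continuous z := by
      refine continuous_iff_continuousAt.mpr fun s => (hzd s).continuousAt
    have hccont : Continuous fun s : ℝ => Complex.exp (-(μ * s)) :=
      Complex.continuous_exp.comp ((continuous_const.mul Complex.continuous_ofReal).neg)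
    have hicont : Continuous fun s : ℝ => Complex.exp (-(μ * s)) • z s := hccont.smul hzcont
    -- FTC
    have hFTC : ∫ s in (0:ℝ)..t, Complex.exp (-(μ * s)) • z s = w t - w 0 :=
      intervalIntegral.integral_eq_sub_of_hasDerivAt (fun s _ => hwd s)
        (hicont.intervalIntegrable 0 t)
    have hw0 : w 0 = x := by
      have h00 : exp ((0:ℝ) • A) = 1 := by
        rw [zero_smul ℝ A, exp_zero]
      simp [hw, hy, h00]
    set k : ℕ := l'.length with hk
    set c₀ : ℝ := -μ.re - b with hc₀
    have hc₀0 : 0 ≤ c₀ := by simp only [hc₀]; linarith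
    set Cb : ℝ := M' * (1+t)^k * Real.exp (c₀ * t) * ‖x₁‖ with hCb
    have hnorme : ∀ s : ℝ, ‖Complex.exp (-(μ * s))‖ = Real.exp (-(μ.re * s)) := by
      intro s
      rw [Complex.norm_exp]
      norm_num
    have hbound : ∀ s ∈ Set.uIoc (0:ℝ) t, ‖Complex.exp (-(μ * s)) • z s‖ ≤ Cb := by
      intro s hs
      rw [Set.uIoc_of_le ht] at hs
      obtain ⟨hs0, hst⟩ := hs
      rw [norm_smul, hnorme]
      have h1 : ‖z s‖ ≤ M' * (1+s)^k * Real.exp (-(b*s)) * ‖x₁‖ :=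
        hM' x₁ hxP s hs0.le
      -- note hst : s ≤ t
      have h2 : Real.exp (-(μ.re * s)) * (M' * (1+s)^k * Real.exp (-(b*s)) * ‖x₁‖)
          ≤ Cb := by
        rw [hCb]
        have e1 : Real.exp (-(μ.re * s)) * Real.exp (-(b*s)) = Real.exp (c₀ * s) := by
          rw [← Real.exp_add, hc₀]; congr 1; ring
        have e2 : Real.exp (c₀ * s) ≤ Real.exp (c₀ * t) := by
          apply Real.exp_le_exp.mpr
          exact mul_le_mul_of_nonneg_left hst hc₀0
        have e3 : (1+s)^k ≤ (1+t)^k := by gcongr <;> linarith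
        calc Real.exp (-(μ.re * s)) * (M' * (1+s)^k * Real.exp (-(b*s)) * ‖x₁‖)
            = M' * (1+s)^k * (Real.exp (-(μ.re * s)) * Real.exp (-(b*s))) * ‖x₁‖ := by ring
          _ = M' * (1+s)^k * Real.exp (c₀ * s) * ‖x₁‖ := by rw [e1]
          _ ≤ M' * (1+t)^k * Real.exp (c₀ * t) * ‖x₁‖ := by
              gcongr <;> first | exact norm_nonneg _ | linarith
      calc Real.exp (-(μ.re * s)) * ‖z s‖
          ≤ Real.exp (-(μ.re * s)) * (M' * (1+s)^k * Real.exp (-(b*s)) * ‖x₁‖) :=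
            mul_le_mul_of_nonneg_left h1 (Real.exp_nonneg _)
        _ ≤ Cb := h2
    have hintn : ‖∫ s in (0:ℝ)..t, Complex.exp (-(μ * s)) • z s‖ ≤ Cb * |t - 0| :=
      intervalIntegral.norm_integral_le_of_norm_le_const hbound
    have hCb0 : 0 ≤ Cb := by
      have : (0:ℝ) ≤ (1+t)^k := by positivity
      have := Real.exp_nonneg (c₀ * t)
      positivity
    have hwt : ‖w t‖ ≤ ‖x‖ + Cb * t := by
      have hwte : w t = x + ∫ s in (0:ℝ)..t, Complex.exp (-(μ * s)) • z s := by
        rw [hFTC, hw0]; abel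
      rw [hwte]
      refine (norm_add_le _ _).trans ?_
      have habs : |t - 0| = t := by rw [sub_zero, abs_of_nonneg ht]
      rw [habs] at hintn
      linarith
    -- recover y from w
    have hyw : y t = Complex.exp (μ * t) • w t := by
      simp only [hw, smul_smul, ← Complex.exp_add]
      norm_num
    have hnyt : ‖y t‖ ≤ Real.exp (μ.re * t) * (‖x‖ + Cb * t) := by
      rw [hyw, norm_smul]
      have hne : ‖Complex.exp (μ * t)‖ = Real.exp (μ.re * t) := by
        rw [Complex.norm_exp]
        norm_num
      rw [hne]
      exact mul_le_mul_of_nonneg_left hwt (Real.exp_nonneg _)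
    -- final estimate
    have hP1 : (1:ℝ) ≤ (1+t)^k := one_le_pow₀ (by linarith)
    have hx0 : (0:ℝ) ≤ ‖x‖ := norm_nonneg x
    have efin : Real.exp (μ.re * t) * (‖x‖ + Cb * t)
        ≤ M' * (1 + c) * (1+t)^(k+1) * Real.exp (-(b*t)) * ‖x‖ := by
      have e1 : Real.exp (μ.re * t) ≤ Real.exp (-(b*t)) := by
        apply Real.exp_le_exp.mpr
        nlinarith
      have e2 : Real.exp (μ.re * t) * Real.exp (c₀ * t) = Real.exp (-(b*t)) := by
        rw [← Real.exp_add, hc₀]; congr 1; ring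
      have expand : Real.exp (μ.re * t) * (‖x‖ + Cb * t)
          = Real.exp (μ.re * t) * ‖x‖
            + M' * (1+t)^k * ‖x₁‖ * t * (Real.exp (μ.re * t) * Real.exp (c₀ * t)) := by
        rw [hCb]; ring
      rw [expand, e2]
      have e3 : Real.exp (μ.re * t) * ‖x‖ ≤ Real.exp (-(b*t)) * ‖x‖ :=
        mul_le_mul_of_nonneg_right e1 hx0
      have e4 : M' * (1+t)^k * ‖x₁‖ * t ≤ M' * (1+t)^k * (c * ‖x‖) * t := by
        have h0k : (0:ℝ) ≤ (1+t)^k := by positivity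
        gcongr <;> linarith
      have e5 : ‖x‖ + M' * (1+t)^k * (c * ‖x‖) * t ≤ M' * (1 + c) * (1+t)^(k+1) * ‖x‖ := by
        have hps : (1+t)^(k+1) = (1+t)^k * (1+t) := pow_succ _ _
        rw [hps]
        have hq1 : (1:ℝ) ≤ M' * (1 + c) := by nlinarith
        have hq : (1:ℝ) ≤ M' * (1 + c) * (1+t)^k := by
          calc (1:ℝ) = 1 * 1 := by ring
            _ ≤ (M' * (1 + c)) * (1+t)^k := mul_le_mul hq1 hP1 zero_le_one (by nlinarith)
        have hM'0 : (0:ℝ) ≤ M' := by linarith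
        have hQ0 : (0:ℝ) ≤ M' * (1+t)^k * t * ‖x‖ :=
          mul_nonneg (mul_nonneg (mul_nonneg hM'0 (by positivity)) ht) hx0
        have hA1 : ‖x‖ ≤ M' * (1 + c) * (1+t)^k * ‖x‖ := by
          calc ‖x‖ = 1 * ‖x‖ := (one_mul _).symm
            _ ≤ (M' * (1 + c) * (1+t)^k) * ‖x‖ := mul_le_mul_of_nonneg_right hq hx0
        have hA2 : M' * (1+t)^k * (c * ‖x‖) * t ≤ M' * (1 + c) * (1+t)^k * t * ‖x‖ := by
          calc M' * (1+t)^k * (c * ‖x‖) * t = (M' * (1+t)^k * t * ‖x‖) * c := by ring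
            _ ≤ (M' * (1+t)^k * t * ‖x‖) * (1 + c) :=
              mul_le_mul_of_nonneg_left (by linarith) hQ0
            _ = M' * (1 + c) * (1+t)^k * t * ‖x‖ := by ring
        have hrhs : M' * (1 + c) * ((1+t)^k * (1+t)) * ‖x‖
            = M' * (1 + c) * (1+t)^k * ‖x‖ + M' * (1 + c) * (1+t)^k * t * ‖x‖ := by ring
        rw [hrhs]
        linarith
      have hexpn : (0:ℝ) ≤ Real.exp (-(b*t)) := (Real.exp_nonneg _)
      calc Real.exp (μ.re * t) * ‖x‖ + M' * (1+t)^k * ‖x₁‖ * t * Real.exp (-(b*t))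
          ≤ Real.exp (-(b*t)) * ‖x‖ + M' * (1+t)^k * (c * ‖x‖) * t * Real.exp (-(b*t)) := by
            have := mul_le_mul_of_nonneg_right e4 hexpn
            linarith
        _ = (‖x‖ + M' * (1+t)^k * (c * ‖x‖) * t) * Real.exp (-(b*t)) := by ring
        _ ≤ (M' * (1 + c) * (1+t)^(k+1) * ‖x‖) * Real.exp (-(b*t)) :=
            mul_le_mul_of_nonneg_right e5 hexpn
        _ = M' * (1 + c) * (1+t)^(k+1) * Real.exp (-(b*t)) * ‖x‖ := by ring
    have hlen : (μ :: l').length = k + 1 := by simp [hk]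
    rw [hlen]
    calc ‖exp (t • A) x‖ = ‖y t‖ := rfl
      _ ≤ Real.exp (μ.re * t) * (‖x‖ + Cb * t) := hnyt
      _ ≤ M' * (1 + c) * (1+t)^(k+1) * Real.exp (-(b*t)) * ‖x‖ := efin


end AuxLemmas

section AuxLemmas2
variable {n : ℕ}

lemma hurwitz_exp_decay {n : ℕ} (H : Matrix (Fin n) (Fin n) ℝ)
    (hH : ∀ z : ℂ, (Polynomial.aeval z) H.charpoly = 0 → z.re < 0) :
    ∃ M a : ℝ, 1 ≤ M ∧ 0 < a ∧ ∀ (t : ℝ), 0 ≤ t → ∀ x : EuclideanSpace ℝ (Fin n),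
      ‖exp (t • (Matrix.toEuclideanCLM (𝕜 := ℝ) H)) x‖ ≤ M * Real.exp (-(a*t)) * ‖x‖ := by
  classical
  set Hc : Matrix (Fin n) (Fin n) ℂ := H.map (algebraMap ℝ ℂ) with hHc
  set p : Polynomial ℂ := Hc.charpoly with hp
  have hpmap : p = (H.charpoly).map (algebraMap ℝ ℂ) := Matrix.charpoly_map H (algebraMap ℝ ℂ)
  set l : List ℂ := p.roots.toList with hldef
  -- all roots have negative real part
  have hroots : ∀ μ ∈ l, μ.re < 0 := by
    intro μ hμ
    have h1 : μ ∈ p.roots := by rwa [hldef, Multiset.mem_toList] at hμ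
    have hp0 : p ≠ 0 := (Matrix.charpoly_monic Hc).ne_zero
    have h2 : p.IsRoot μ := (mem_roots hp0).mp h1
    apply hH
    rw [Polynomial.aeval_def, ← Polynomial.eval_map, ← hpmap]
    exact h2
  -- choose b
  set b : ℝ := ((l.map (fun μ => -μ.re)).foldr min 1) / 2 with hbdef
  obtain ⟨hmin_pos, hmin_le⟩ := list_min_pos (l.map (fun μ => -μ.re)) (by
    intro x hx
    obtain ⟨μ, hμ, rfl⟩ := List.mem_map.mp hx
    linarith [hroots μ hμ])
  have hb : 0 < b := by rw [hbdef]; linarith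
  have hlb : ∀ μ ∈ l, μ.re ≤ -b := by
    intro μ hμ
    have := hmin_le (-μ.re) (List.mem_map.mpr ⟨μ, hμ, rfl⟩)
    rw [hbdef]; linarith
  -- the complex operator
  set A₀ : EuclideanSpace ℂ (Fin n) →L[ℂ] EuclideanSpace ℂ (Fin n) :=
    Matrix.toEuclideanCLM (𝕜 := ℂ) Hc with hA₀
  set A : EuclideanSpace ℂ (Fin n) →L[ℝ] EuclideanSpace ℂ (Fin n) := A₀.restrictScalars ℝ with hA
  have hAsmul : ∀ (μ : ℂ) (x : EuclideanSpace ℂ (Fin n)), A (μ • x) = μ • A x := by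
    intro μ x
    exact A₀.map_smul μ x
  -- Cayley–Hamilton: the product of (A - μ•1) over roots annihilates everything
  have hannihil : ∀ x : EuclideanSpace ℂ (Fin n),
      ((l.map (fun μ => A - μ • (1 : EuclideanSpace ℂ (Fin n) →L[ℝ] EuclideanSpace ℂ (Fin n)))).prod) x = 0 := by
    have hsplits : p.Splits := IsAlgClosed.splits p
    have hfac : p = (l.map (fun a => X - C a)).prod := by
      have h1 := hsplits.eq_prod_roots_of_monic (Matrix.charpoly_monic Hc)
      rw [hldef]
      rw [← Multiset.coe_toList p.roots] at h1
      rw [Multiset.map_coe, Multiset.prod_coe] at h1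
      exact h1
    have hCH : aeval Hc p = 0 := Matrix.aeval_self_charpoly Hc
    have hmat : (l.map (fun μ => Hc - μ • (1 : Matrix (Fin n) (Fin n) ℂ))).prod = 0 := by
      have h2 : aeval Hc p = (l.map (fun μ => Hc - μ • (1 : Matrix (Fin n) (Fin n) ℂ))).prod := by
        rw [hfac, map_list_prod (aeval Hc), List.map_map]
        congr 1
        refine List.map_congr_left fun μ _ => ?_
        simp [Function.comp, Algebra.algebraMap_eq_smul_one]
      rw [← h2, hCH]
    have hclm : (l.map (fun μ => A₀ - μ • (1 : EuclideanSpace ℂ (Fin n) →L[ℂ] EuclideanSpace ℂ (Fin n)))).prod = 0 := by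
      have h3 := congrArg (Matrix.toEuclideanCLM (𝕜 := ℂ) (n := Fin n)) hmat
      rw [map_list_prod, List.map_map] at h3
      rw [map_zero] at h3
      rw [show (List.map (⇑(Matrix.toEuclideanCLM (𝕜 := ℂ) (n := Fin n)) ∘ fun μ => Hc - μ • 1) l)
          = List.map (fun μ => A₀ - μ • (1 : EuclideanSpace ℂ (Fin n) →L[ℂ] EuclideanSpace ℂ (Fin n))) l
        from List.map_congr_left fun μ _ => by
          simp [Function.comp, map_sub, map_smul, map_one, hA₀]] at h3
      exact h3
    have hres : ∀ (L : List ℂ) (v : EuclideanSpace ℂ (Fin n)),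
        ((L.map (fun μ => A - μ • (1 : EuclideanSpace ℂ (Fin n) →L[ℝ] EuclideanSpace ℂ (Fin n)))).prod) v
          = ((L.map (fun μ => A₀ - μ • (1 : EuclideanSpace ℂ (Fin n) →L[ℂ] EuclideanSpace ℂ (Fin n)))).prod) v := by
      intro L
      induction L with
      | nil => intro v; simp
      | cons μ L ih =>
        intro v
        simp only [List.map_cons, List.prod_cons, ContinuousLinearMap.mul_apply]
        rw [ih v]
        simp only [ContinuousLinearMap.sub_apply, ContinuousLinearMap.smul_apply,
          ContinuousLinearMap.one_apply]
        rfl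
    intro x
    rw [hres l x, hclm]
    rfl
  obtain ⟨M₀, hM₀1, hM₀⟩ := decay_list A hAsmul b l hlb
  -- absorb the polynomial factor
  set k : ℕ := l.length with hk
  obtain ⟨D, hD1, hD⟩ : ∃ D : ℝ, 1 ≤ D ∧ ∀ t : ℝ, 0 ≤ t → (1+t)^k ≤ D * Real.exp (b/2 * t) := by
    rcases Nat.eq_zero_or_pos k with hk0 | hkpos
    · refine ⟨1, le_refl 1, fun t ht => ?_⟩
      rw [hk0, pow_zero, one_mul]
      exact Real.one_le_exp (by positivity)
    · set c : ℝ := b/(2*k) with hcdef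
      have hcpos : 0 < c := by
        rw [hcdef]
        have : (0:ℝ) < 2*k := by positivity
        positivity
      refine ⟨(1 + 1/c)^k, one_le_pow₀ (by nlinarith [one_div_pos.mpr hcpos]), fun t ht => ?_⟩
      have he : 1 + c*t ≤ Real.exp (c*t) := by linarith [Real.add_one_le_exp (c*t)]
      have h1 : 1 + t ≤ (1 + 1/c) * Real.exp (c*t) := by
        have h2 : (1+1/c)*(1+c*t) ≤ (1+1/c)*Real.exp (c*t) :=
          mul_le_mul_of_nonneg_left he (by positivity)
        have h3 : (1+1/c)*(1+c*t) = 1 + c*t + 1/c + t := by field_simp; ring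
        have h4 : 0 ≤ c*t := mul_nonneg hcpos.le ht
        have h5 : 0 < 1/c := one_div_pos.mpr hcpos
        linarith
      have h6 : (1+t)^k ≤ ((1 + 1/c) * Real.exp (c*t))^k :=
        pow_le_pow_left₀ (by linarith) h1 k
      have h7 : ((1 + 1/c) * Real.exp (c*t))^k = (1+1/c)^k * Real.exp (c*t*k) := by
        rw [mul_pow, ← Real.exp_nat_mul, mul_comm ((k:ℝ)) (c*t)]
      have h8 : c*t*(k:ℝ) = b/2 * t := by
        rw [hcdef]
        field_simp
      rw [h7, h8] at h6
      exact h6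
  refine ⟨M₀ * D, b/2, by nlinarith, by linarith, fun t ht x => ?_⟩
  set L : EuclideanSpace ℝ (Fin n) →L[ℝ] EuclideanSpace ℝ (Fin n) :=
    Matrix.toEuclideanCLM (𝕜 := ℝ) H with hLdef
  -- the embedding ι
  let ι₀ : EuclideanSpace ℝ (Fin n) →ₗ[ℝ] EuclideanSpace ℂ (Fin n) :=
    { toFun := fun v => WithLp.toLp 2 (fun i => (v i : ℂ))
      map_add' := fun v w => by
        ext i
        simp
      map_smul' := fun c v => by
        ext i
        simp [Complex.real_smul] }
  let ι : EuclideanSpace ℝ (Fin n) →L[ℝ] EuclideanSpace ℂ (Fin n) :=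
    LinearMap.toContinuousLinearMap ι₀
  have hιapp : ∀ (v : EuclideanSpace ℝ (Fin n)) (i : Fin n), (ι v) i = (v i : ℂ) :=
    fun v i => rfl
  have hιnorm : ∀ v, ‖ι v‖ = ‖v‖ := by
    intro v
    rw [EuclideanSpace.norm_eq, EuclideanSpace.norm_eq]
    congr 1
    refine Finset.sum_congr rfl fun i _ => ?_
    rw [hιapp, Complex.norm_real]
  have hιL : ∀ v, ι (L v) = A (ι v) := by
    intro v
    ext i
    show ((L v) i : ℂ) = (A₀ (ι v)) i
    have h1 := congrFun (Matrix.ofLp_toEuclideanCLM (𝕜 := ℝ) H v) i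
    have h2 := congrFun (Matrix.ofLp_toEuclideanCLM (𝕜 := ℂ) Hc (ι v)) i
    simp only [Matrix.toLin'_apply, Matrix.mulVec, dotProduct]
      at h1 h2
    rw [h1, h2]
    push_cast
    refine Finset.sum_congr rfl fun j _ => ?_
    rw [hιapp]
    simp [hHc, Matrix.map_apply]
  have hpow : ∀ (m : ℕ) (v), ι (((t • L)^m) v) = ((t • A)^m) (ι v) := by
    intro m
    induction m with
    | zero => intro v; simp
    | succ m ih =>
      intro v
      rw [pow_succ, pow_succ, ContinuousLinearMap.mul_apply, ContinuousLinearMap.mul_apply,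
        ih ((t • L) v)]
      congr 1
      rw [ContinuousLinearMap.smul_apply, ContinuousLinearMap.smul_apply, map_smul, hιL]
  have hexpι : ι (exp (t • L) x) = exp (t • A) (ι x) := by
    have hsL : HasSum (fun m : ℕ => ((m.factorial : ℝ))⁻¹ • ((t • L)^m) x) (exp (t • L) x) := by
      have h0 := (expSeries_hasSum_exp (𝕂 := ℝ) (t • L)).mapL
        (ContinuousLinearMap.apply ℝ (EuclideanSpace ℝ (Fin n)) x)
      simpa [expSeries_apply_eq] using h0
    have hsA : HasSum (fun m : ℕ => ((m.factorial : ℝ))⁻¹ • ((t • A)^m) (ι x))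
        (exp (t • A) (ι x)) := by
      have h0 := (expSeries_hasSum_exp (𝕂 := ℝ) (t • A)).mapL
        (ContinuousLinearMap.apply ℝ (EuclideanSpace ℂ (Fin n)) (ι x))
      simpa [expSeries_apply_eq] using h0
    have hsL' : HasSum (fun m : ℕ => ((m.factorial : ℝ))⁻¹ • ((t • A)^m) (ι x))
        (ι (exp (t • L) x)) := by
      have h0 := hsL.mapL ι
      simpa only [map_smul, hpow] using h0
    exact hsL'.unique hsA
  calc ‖exp (t • L) x‖ = ‖ι (exp (t • L) x)‖ := (hιnorm _).symm
    _ = ‖exp (t • A) (ι x)‖ := by rw [hexpι]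
    _ ≤ M₀ * (1+t)^k * Real.exp (-(b*t)) * ‖ι x‖ := hM₀ (ι x) (hannihil (ι x)) t ht
    _ = M₀ * (1+t)^k * Real.exp (-(b*t)) * ‖x‖ := by rw [hιnorm]
    _ ≤ M₀ * D * Real.exp (-(b/2*t)) * ‖x‖ := by
        have h1 := hD t ht
        have h2 : Real.exp (b/2*t) * Real.exp (-(b*t)) = Real.exp (-(b/2*t)) := by
          rw [← Real.exp_add]; congr 1; ring
        have hM₀0 : (0:ℝ) ≤ M₀ := by linarith
        calc M₀ * (1+t)^k * Real.exp (-(b*t)) * ‖x‖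
            ≤ M₀ * (D * Real.exp (b/2*t)) * Real.exp (-(b*t)) * ‖x‖ := by gcongr
          _ = M₀ * D * (Real.exp (b/2*t) * Real.exp (-(b*t))) * ‖x‖ := by ring
          _ = M₀ * D * Real.exp (-(b/2*t)) * ‖x‖ := by rw [h2]

end AuxLemmas2

/-- Local synchronization under a quadratic remainder bound:
for Hurwitz `H` and continuous `g` with `‖g(t,v)‖ ≤ C‖v‖²`, solutions of
`r' = H·r + g(t,r)` with small enough initial norm tend to `0`. -/
theorem local_synchronization_quadratic_bound {n : ℕ}
    (H : Matrix (Fin n) (Fin n) ℝ)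
    (hH : ∀ z : ℂ, (Polynomial.aeval z) H.charpoly = 0 → z.re < 0)
    (C : ℝ) (hC : 0 < C)
    (g : ℝ × EuclideanSpace ℝ (Fin n) → EuclideanSpace ℝ (Fin n))
    (hg : Continuous g)
    (hgb : ∀ (t : ℝ) (v : EuclideanSpace ℝ (Fin n)), ‖g (t, v)‖ ≤ C * ‖v‖ ^ 2) :
    ∃ δ > 0, ∀ r : ℝ → EuclideanSpace ℝ (Fin n),
      (∀ t : ℝ, 0 ≤ t → HasDerivAt r (Matrix.toEuclideanLin H (r t) + g (t, r t)) t) →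
      ‖r 0‖ ≤ δ →
      Filter.Tendsto (fun t => ‖r t‖) Filter.atTop (nhds 0) := by
  classical
  obtain ⟨M, a, hM1, ha, hMdec⟩ := hurwitz_exp_decay H hH
  have hM0 : (0:ℝ) < M := by linarith
  set L : EuclideanSpace ℝ (Fin n) →L[ℝ] EuclideanSpace ℝ (Fin n) :=
    Matrix.toEuclideanCLM (𝕜 := ℝ) H with hLdef
  set δ : ℝ := a / (8 * M^2 * C) with hδdef
  have hδ : 0 < δ := by positivity
  refine ⟨δ, hδ, fun r hr hr0 => ?_⟩
  have hrct : ∀ s : ℝ, 0 ≤ s → ContinuousAt r s := fun s hs => (hr s hs).continuousAt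
  have hLlin : ∀ v, Matrix.toEuclideanLin H v = L v := fun v => rfl
  -- variation of constants
  have hVOC : ∀ T : ℝ, 0 ≤ T →
      r T = exp (T • L) (r 0) + ∫ s in (0:ℝ)..T, exp ((T - s) • L) (g (s, r s)) := by
    intro T hT
    have hrcOn : ContinuousOn r (Set.uIcc 0 T) := by
      intro s hs
      rw [Set.uIcc_of_le hT] at hs
      exact (hrct s hs.1).continuousWithinAt
    have hgc : ContinuousOn (fun s => g (s, r s)) (Set.uIcc 0 T) :=
      hg.comp_continuousOn (continuous_id.continuousOn.prodMk hrcOn)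
    have hker : ContinuousOn (fun s => exp ((T - s) • L)) (Set.uIcc 0 T) :=
      by letI : NormedAlgebra ℚ (EuclideanSpace ℝ (Fin n) →L[ℝ] EuclideanSpace ℝ (Fin n)) := NormedAlgebra.restrictScalars ℚ ℝ _; exact (exp_continuous.comp (((continuous_const.sub continuous_id).smul continuous_const))).continuousOn
    have hintc : ContinuousOn (fun s => exp ((T - s) • L) (g (s, r s))) (Set.uIcc 0 T) :=
      hker.clm_apply hgc
    have hder : ∀ s ∈ Set.uIcc (0:ℝ) T,
        HasDerivAt (fun u => exp ((T - u) • L) (r u)) (exp ((T - s) • L) (g (s, r s))) s := by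
      intro s hs
      rw [Set.uIcc_of_le hT] at hs
      have h1 := hasDerivAt_exp_smul_const (𝕂 := ℝ) L (T - s)
      have h2 : HasDerivAt (fun u : ℝ => T - u) (-1 : ℝ) s := by
        simpa using (hasDerivAt_id s).const_sub T
      have h3 : HasDerivAt (fun u : ℝ => exp ((T - u) • L))
          ((-1 : ℝ) • (exp ((T - s) • L) * L)) s := h1.scomp s h2
      have h4 := h3.clm_apply (hr s hs.1)
      refine h4.congr_deriv ?_
      simp only [ContinuousLinearMap.smul_apply, ContinuousLinearMap.mul_apply, map_add,
        neg_smul, one_smul, hLlin]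
      abel
    have hFTC := intervalIntegral.integral_eq_sub_of_hasDerivAt hder hintc.intervalIntegrable
    have hTT : exp ((T - T) • L) (r T) = r T := by
      rw [sub_self]
      have h00 : exp ((0:ℝ) • L) = 1 := by rw [zero_smul ℝ L, exp_zero]
      rw [h00]
      rfl
    rw [hTT, sub_zero] at hFTC
    rw [hFTC]
    abel
  -- the exponential integral bound
  have hexpint : ∀ T : ℝ, 0 ≤ T → (∫ s in (0:ℝ)..T, Real.exp (-(a*s))) ≤ 1/a := by
    intro T hT
    have hder : ∀ s ∈ Set.uIcc (0:ℝ) T,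
        HasDerivAt (fun u : ℝ => -(1/a) * Real.exp (-(a*u))) (Real.exp (-(a*s))) s := by
      intro s _
      have h1 : HasDerivAt (fun u : ℝ => -(a*u)) (-a) s := by
        simpa using ((hasDerivAt_id s).const_mul a).fun_neg
      have h2 := h1.exp
      have h3 := h2.const_mul (-(1/a))
      refine h3.congr_deriv ?_
      field_simp
    have h4 := intervalIntegral.integral_eq_sub_of_hasDerivAt hder
      ((Real.continuous_exp.comp (continuous_const.mul continuous_id).neg).intervalIntegrable 0 T)
    rw [h4]
    have h5 := Real.exp_pos (-(a*T))
    have h6 : Real.exp (-(a*(0:ℝ))) = 1 := by norm_num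
    rw [h6]
    have h7 : 0 < (1/a) * Real.exp (-(a*T)) := by positivity
    linarith
  -- key single-step estimate
  have hest : ∀ T : ℝ, 0 ≤ T → (∀ s : ℝ, 0 ≤ s → s ≤ T → ‖r s‖ ≤ 2*M*δ * Real.exp (-(a*s))) →
      ‖r T‖ ≤ (3/2) * M * δ * Real.exp (-(a*T)) := by
    intro T hT hbd
    have hVT := hVOC T hT
    have hrcOn : ContinuousOn r (Set.uIcc 0 T) := by
      intro s hs
      rw [Set.uIcc_of_le hT] at hs
      exact (hrct s hs.1).continuousWithinAt
    have hgc : ContinuousOn (fun s => g (s, r s)) (Set.uIcc 0 T) :=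
      hg.comp_continuousOn (continuous_id.continuousOn.prodMk hrcOn)
    have hker : ContinuousOn (fun s => exp ((T - s) • L)) (Set.uIcc 0 T) :=
      by letI : NormedAlgebra ℚ (EuclideanSpace ℝ (Fin n) →L[ℝ] EuclideanSpace ℝ (Fin n)) := NormedAlgebra.restrictScalars ℚ ℝ _; exact (exp_continuous.comp (((continuous_const.sub continuous_id).smul continuous_const))).continuousOn
    have hic : ContinuousOn (fun s => exp ((T - s) • L) (g (s, r s))) (Set.uIcc 0 T) :=
      hker.clm_apply hgc
    have h1 : ‖exp (T • L) (r 0)‖ ≤ M * δ * Real.exp (-(a*T)) := by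
      have e1 := hMdec T hT (r 0)
      have e2 : M * Real.exp (-(a*T)) * ‖r 0‖ ≤ M * Real.exp (-(a*T)) * δ := by
        have : (0:ℝ) ≤ M * Real.exp (-(a*T)) := by positivity
        exact mul_le_mul_of_nonneg_left hr0 this
      calc ‖exp (T • L) (r 0)‖ ≤ M * Real.exp (-(a*T)) * ‖r 0‖ := e1
        _ ≤ M * Real.exp (-(a*T)) * δ := e2
        _ = M * δ * Real.exp (-(a*T)) := by ring
    set K : ℝ := M * C * (2*M*δ)^2 with hK
    have hK0 : (0:ℝ) ≤ K := by positivity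
    have h2 : ∀ s ∈ Set.Icc (0:ℝ) T, ‖exp ((T - s) • L) (g (s, r s))‖
        ≤ K * Real.exp (-(a*T)) * Real.exp (-(a*s)) := by
      intro s hs
      obtain ⟨hs0, hsT⟩ := hs
      have e1 : ‖exp ((T - s) • L) (g (s, r s))‖
          ≤ M * Real.exp (-(a*(T-s))) * ‖g (s, r s)‖ := hMdec (T-s) (by linarith) _
      have e2 : ‖g (s, r s)‖ ≤ C * ‖r s‖^2 := hgb s (r s)
      have e3 : ‖r s‖ ≤ 2*M*δ*Real.exp (-(a*s)) := hbd s hs0 hsT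
      have e4 : ‖r s‖^2 ≤ (2*M*δ)^2 * Real.exp (-(a*s))^2 := by
        rw [← mul_pow]
        exact pow_le_pow_left₀ (norm_nonneg _) e3 2
      have e5 : Real.exp (-(a*(T-s))) * Real.exp (-(a*s))^2
          = Real.exp (-(a*T)) * Real.exp (-(a*s)) := by
        rw [pow_two, ← Real.exp_add, ← Real.exp_add, ← Real.exp_add]
        congr 1
        ring
      calc ‖exp ((T - s) • L) (g (s, r s))‖
          ≤ M * Real.exp (-(a*(T-s))) * (C * ‖r s‖^2) := by
            refine e1.trans ?_
            have : (0:ℝ) ≤ M * Real.exp (-(a*(T-s))) := by positivity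
            exact mul_le_mul_of_nonneg_left e2 this
        _ ≤ M * Real.exp (-(a*(T-s))) * (C * ((2*M*δ)^2 * Real.exp (-(a*s))^2)) := by
            have : (0:ℝ) ≤ M * Real.exp (-(a*(T-s))) := by positivity
            refine mul_le_mul_of_nonneg_left ?_ this
            exact mul_le_mul_of_nonneg_left e4 hC.le
        _ = K * (Real.exp (-(a*(T-s))) * Real.exp (-(a*s))^2) := by rw [hK]; ring
        _ = K * (Real.exp (-(a*T)) * Real.exp (-(a*s))) := by rw [e5]
        _ = K * Real.exp (-(a*T)) * Real.exp (-(a*s)) := by ring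
    have h3 : ‖∫ s in (0:ℝ)..T, exp ((T - s) • L) (g (s, r s))‖
        ≤ K * Real.exp (-(a*T)) * (1/a) := by
      refine (intervalIntegral.norm_integral_le_integral_norm hT).trans ?_
      have h4 : (∫ s in (0:ℝ)..T, ‖exp ((T - s) • L) (g (s, r s))‖)
          ≤ ∫ s in (0:ℝ)..T, K * Real.exp (-(a*T)) * Real.exp (-(a*s)) := by
        apply intervalIntegral.integral_mono_on hT
        · exact hic.norm.intervalIntegrable
        · exact (continuous_const.mul
            (Real.continuous_exp.comp (continuous_const.mul continuous_id).neg)).intervalIntegrable 0 T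
        · exact h2
      refine h4.trans ?_
      rw [intervalIntegral.integral_const_mul]
      have h5 := hexpint T hT
      have h6 : (0:ℝ) ≤ K * Real.exp (-(a*T)) := by positivity
      exact mul_le_mul_of_nonneg_left h5 h6
    have hKfin : K * (1/a) ≤ M * δ / 2 := by
      have heq : K * (1/a) = M * δ / 2 := by
        rw [hK, hδdef]
        field_simp
        ring
      exact le_of_eq heq
    rw [hVT]
    refine (norm_add_le _ _).trans ?_
    have hle := add_le_add h1 h3
    refine hle.trans ?_
    have h7 : K * Real.exp (-(a*T)) * (1/a) = (K * (1/a)) * Real.exp (-(a*T)) := by ring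
    rw [h7]
    have h8 : (K * (1/a)) * Real.exp (-(a*T)) ≤ (M * δ / 2) * Real.exp (-(a*T)) :=
      mul_le_mul_of_nonneg_right hKfin (Real.exp_nonneg _)
    linarith
  -- global bound via barrier argument
  have hglobal : ∀ s : ℝ, 0 ≤ s → ‖r s‖ ≤ 2*M*δ*Real.exp (-(a*s)) := by
    by_contra hcon
    push_neg at hcon
    obtain ⟨s₀, hs₀0, hs₀⟩ := hcon
    set ψ : ℝ → ℝ := fun s => ‖r s‖ - 2*M*δ*Real.exp (-(a*s)) with hψdef
    have hψc : ∀ s : ℝ, 0 ≤ s → ContinuousAt ψ s := by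
      intro s hs
      exact ((hrct s hs).norm).sub
        ((continuous_const.mul
          (Real.continuous_exp.comp (continuous_const.mul continuous_id).neg)).continuousAt)
    set S : Set ℝ := Set.Ici 0 ∩ ψ ⁻¹' (Set.Ici 0) with hS
    have hScl : IsClosed S := by
      refine ContinuousOn.preimage_isClosed_of_isClosed ?_ isClosed_Ici isClosed_Ici
      intro s hs
      exact (hψc s hs).continuousWithinAt
    have hSne : S.Nonempty := ⟨s₀, hs₀0, by simp [hψdef]; linarith⟩
    have hSbdd : BddBelow S := ⟨0, fun s hs => hs.1⟩
    set T := sInf S with hTdef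
    have hTS : T ∈ S := hScl.csInf_mem hSne hSbdd
    have hT0 : 0 ≤ T := hTS.1
    have hTge : 2*M*δ*Real.exp (-(a*T)) ≤ ‖r T‖ := by
      have := hTS.2
      simp only [Set.mem_preimage, Set.mem_Ici, hψdef] at this
      linarith
    have h0S : (0:ℝ) ∉ S := by
      intro h0
      have h1 := h0.2
      simp only [Set.mem_preimage, Set.mem_Ici, hψdef] at h1
      rw [mul_zero, neg_zero, Real.exp_zero, mul_one] at h1
      nlinarith
    have hTpos : 0 < T := lt_of_le_of_ne hT0 (fun h => h0S (by rw [← h] at hTS; exact hTS))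
    have hlt : ∀ s, 0 ≤ s → s < T → ‖r s‖ ≤ 2*M*δ*Real.exp (-(a*s)) := by
      intro s hs0 hsT
      by_contra hc
      push_neg at hc
      have hmem : s ∈ S := ⟨hs0, by simp [hψdef]; linarith⟩
      exact absurd (csInf_le hSbdd hmem) (not_le.mpr hsT)
    have hT_le : ‖r T‖ ≤ 2*M*δ*Real.exp (-(a*T)) := by
      have hTcl : T ∈ closure (Set.Ico (0:ℝ) T) := by
        rw [closure_Ico (ne_of_lt hTpos)]
        exact Set.right_mem_Icc.mpr hT0
      have hnb : (nhdsWithin T (Set.Ico 0 T)).NeBot :=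
        mem_closure_iff_nhdsWithin_neBot.mp hTcl
      have htd : Filter.Tendsto ψ (nhdsWithin T (Set.Ico 0 T)) (nhds (ψ T)) :=
        ((hψc T hT0).continuousWithinAt).tendsto
      have hev : ∀ᶠ s in nhdsWithin T (Set.Ico 0 T), ψ s ≤ 0 := by
        refine eventually_nhdsWithin_of_forall ?_
        intro s hs
        have := hlt s hs.1 hs.2
        simp only [hψdef]
        linarith
      have hψT : ψ T ≤ 0 := le_of_tendsto htd hev
      simp only [hψdef] at hψT
      linarith
    have hbd : ∀ s, 0 ≤ s → s ≤ T → ‖r s‖ ≤ 2*M*δ*Real.exp (-(a*s)) := by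
      intro s hs0 hsT
      rcases lt_or_eq_of_le hsT with h | h
      · exact hlt s hs0 h
      · rw [h]; exact hT_le
    have hfin := hest T hT0 hbd
    nlinarith [mul_pos (mul_pos hM0 hδ) (Real.exp_pos (-(a*T))), hfin, hTge]
  -- conclusion: squeeze
  have hmul : Filter.Tendsto (fun t : ℝ => a * t) Filter.atTop Filter.atTop :=
    Filter.Tendsto.const_mul_atTop ha Filter.tendsto_id
  have hneg : Filter.Tendsto (fun t : ℝ => -(a * t)) Filter.atTop Filter.atBot :=
    Filter.tendsto_neg_atTop_atBot.comp hmul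
  have hexp0 : Filter.Tendsto (fun t : ℝ => 2*M*δ*Real.exp (-(a*t))) Filter.atTop (nhds 0) := by
    have h2 := Real.tendsto_exp_atBot.comp hneg
    have h3 := h2.const_mul (2*M*δ)
    simpa using h3
  refine squeeze_zero' ?_ ?_ hexp0
  · exact Filter.Eventually.of_forall (fun t => norm_nonneg _)
  · filter_upwards [Filter.eventually_ge_atTop (0:ℝ)] with t ht using hglobal t ht
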